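/- Let m : H₁ → H₂ be an injective linear map between complex Hilbert spaces and let m̄ be the induced map on rays. Then m̄ preserves superpositions (i.e., for all non-orthogonal rays x, y and r ∈ [0,1], m̄(x) is not orthogonal to m̄(y) and m̄(rx + (1−r)y) = r·m̄(x) + (1−r)·m̄(y)) if and only if there is a real constant c > 0 with ‖m(u)‖ = c‖u‖ for all u ∈ H₁. -/

import Mathlib

local notation "⟪" x ", " y "⟫" => @inner ℂ _ _ x y

/-- The map on rays induced by an injective linear map `m` preserves superpositions:
for any non-orthogonal pair of rays (given by unit vectors `v`, `w` with
`⟪v, w⟫` real and positive) and any `r ∈ [0,1]`, the image rays are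
non-orthogonal, and the image of the superposition ray is the superposition
of the image rays (computed from any admissible unit representatives). -/
def PreservesSuperpositions {H₁ H₂ : Type*}
    [NormedAddCommGroup H₁] [InnerProductSpace ℂ H₁]
    [NormedAddCommGroup H₂] [InnerProductSpace ℂ H₂]
    (m : H₁ →ₗ[ℂ] H₂) : Prop :=
  ∀ v w : H₁, ‖v‖ = 1 → ‖w‖ = 1 →
    (⟪v, w⟫).im = 0 → 0 < (⟪v, w⟫).re →
    ∀ r : ℝ, 0 ≤ r → r ≤ 1 →
      (¬ ∀ a ∈ Submodule.span ℂ {m v}, ∀ b ∈ Submodule.span ℂ {m w}, ⟪a, b⟫ = 0) ∧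
      (∀ v' w' : H₂, ‖v'‖ = 1 → ‖w'‖ = 1 →
        Submodule.span ℂ {v'} = Submodule.span ℂ {m v} →
        Submodule.span ℂ {w'} = Submodule.span ℂ {m w} →
        (⟪v', w'⟫).im = 0 → 0 < (⟪v', w'⟫).re →
        Submodule.span ℂ {m ((Real.sqrt r : ℂ) • v + (Real.sqrt (1 - r) : ℂ) • w)} =
          Submodule.span ℂ {(Real.sqrt r : ℂ) • v' + (Real.sqrt (1 - r) : ℂ) • w'})

section Aux
variable {H₁ H₂ : Type*}
  [NormedAddCommGroup H₁] [InnerProductSpace ℂ H₁]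
  [NormedAddCommGroup H₂] [InnerProductSpace ℂ H₂]

lemma spanSmul {α : ℂ} (hα : α ≠ 0) (z : H₂) :
    Submodule.span ℂ {α • z} = Submodule.span ℂ {z} :=
  Submodule.span_singleton_smul_eq hα.isUnit z

lemma innerScaled {c : ℝ} (m : H₁ →ₗ[ℂ] H₂)
    (h : ∀ u, ‖m u‖ = c * ‖u‖) (x y : H₁) :
    ⟪m x, m y⟫ = (c^2 : ℂ) * ⟪x, y⟫ := by
  have h1 : m x + m y = m (x + y) := (m.map_add x y).symm
  have h2 : m x - m y = m (x - y) := (m.map_sub x y).symm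
  have h3 : m x - (RCLike.I : ℂ) • m y = m (x - (RCLike.I : ℂ) • y) := by
    rw [map_sub, map_smul]
  have h4 : m x + (RCLike.I : ℂ) • m y = m (x + (RCLike.I : ℂ) • y) := by
    rw [map_add, map_smul]
  rw [inner_eq_sum_norm_sq_div_four, inner_eq_sum_norm_sq_div_four (𝕜 := ℂ) (E := H₁),
    h1, h2, h3, h4, h, h, h, h]
  simp only [show ∀ a : ℝ, (RCLike.ofReal a : ℂ) = Complex.ofReal a from fun _ => rfl]
  push_cast
  ring

/-- If `m` preserves superpositions, any two unit vectors which are linearly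
independent and have real positive inner product have images of equal norm. -/
lemma keyLemma (m : H₁ →ₗ[ℂ] H₂) (hinj : Function.Injective m)
    (hp : PreservesSuperpositions m) (v w : H₁)
    (hv : ‖v‖ = 1) (hw : ‖w‖ = 1)
    (hind : ∀ s t : ℂ, s • v + t • w = 0 → s = 0 ∧ t = 0)
    (him : (⟪v, w⟫).im = 0) (hre : 0 < (⟪v, w⟫).re) :
    ‖m v‖ = ‖m w‖ := by
  obtain ⟨h1, h2⟩ := hp v w hv hw him hre (1/2) (by norm_num) (by norm_num)
  have hvne : v ≠ 0 := fun h => by simp [h] at hv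
  have hwne : w ≠ 0 := fun h => by simp [h] at hw
  have hmvne : m v ≠ 0 := fun h => hvne (hinj (by simp [h]))
  have hmwne : m w ≠ 0 := fun h => hwne (hinj (by simp [h]))
  set a : ℝ := ‖m v‖ with ha
  set b : ℝ := ‖m w‖ with hb
  have hapos : 0 < a := norm_pos_iff.mpr hmvne
  have hbpos : 0 < b := norm_pos_iff.mpr hmwne
  set t : ℂ := ⟪m v, m w⟫ with hts
  have htne : t ≠ 0 := by
    intro ht
    apply h1
    intro x hx y hy
    obtain ⟨α, rfl⟩ := Submodule.mem_span_singleton.mp hx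
    obtain ⟨β, rfl⟩ := Submodule.mem_span_singleton.mp hy
    rw [inner_smul_left, inner_smul_right, ← hts, ht]
    ring
  set μ : ℂ := (starRingEnd ℂ) t / ((‖t‖ : ℂ) * (b : ℂ)) with hμ
  have htnorm : (0:ℝ) < ‖t‖ := norm_pos_iff.mpr htne
  have hμne : μ ≠ 0 := by
    apply div_ne_zero (by simpa using htne)
    simp only [ne_eq, mul_eq_zero, Complex.ofReal_eq_zero]
    push_neg
    exact ⟨ne_of_gt htnorm, ne_of_gt hbpos⟩
  set v' : H₂ := ((a : ℂ))⁻¹ • m v with hv'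
  set w' : H₂ := μ • m w with hw'
  have hane : ((a:ℂ)) ≠ 0 := by simpa using ne_of_gt hapos
  have hnv' : ‖v'‖ = 1 := by
    rw [hv', norm_smul]
    simp [abs_of_pos hapos, inv_mul_cancel₀ (ne_of_gt hapos)]
    exact inv_mul_cancel₀ (ne_of_gt hapos)
  have hμnorm : ‖μ‖ = b⁻¹ := by
    have : ‖μ‖ = ‖t‖ / (‖t‖ * b) := by
      rw [hμ, norm_div, norm_mul, RCLike.norm_conj, Complex.norm_real, Complex.norm_real,
        Real.norm_eq_abs, Real.norm_eq_abs, abs_of_pos htnorm, abs_of_pos hbpos]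
    rw [this, div_mul_eq_div_div, div_self (ne_of_gt htnorm), one_div]
  have hnw' : ‖w'‖ = 1 := by
    rw [hw', norm_smul, hμnorm, ← hb, inv_mul_cancel₀ (ne_of_gt hbpos)]
  have hsp1 : Submodule.span ℂ {v'} = Submodule.span ℂ {m v} := spanSmul (inv_ne_zero hane) _
  have hsp2 : Submodule.span ℂ {w'} = Submodule.span ℂ {m w} := spanSmul hμne _
  have hinner : ⟪v', w'⟫ = ((‖t‖ / (a * b) : ℝ) : ℂ) := by
    rw [hv', hw', inner_smul_left, inner_smul_right, ← hts, hμ]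
    rw [map_inv₀, Complex.conj_ofReal]
    rw [div_mul_eq_mul_div, mul_comm ((starRingEnd ℂ) t) t, Complex.mul_conj']
    have htC : ((‖t‖ : ℝ) : ℂ) ≠ 0 := by
      simpa using ne_of_gt htnorm
    have hbC : ((b:ℂ)) ≠ 0 := by simpa using ne_of_gt hbpos
    push_cast
    field_simp
  have him' : (⟪v', w'⟫).im = 0 := by rw [hinner, Complex.ofReal_im]
  have hre' : 0 < (⟪v', w'⟫).re := by
    rw [hinner, Complex.ofReal_re]
    positivity
  have hS := h2 v' w' hnv' hnw' hsp1 hsp2 him' hre'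
  have h12 : (1:ℝ) - 1/2 = 1/2 := by norm_num
  rw [h12] at hS
  set s : ℝ := Real.sqrt (1/2) with hsdef
  have hspos : 0 < s := Real.sqrt_pos.mpr (by norm_num)
  have hsC : ((s:ℝ):ℂ) ≠ 0 := by simpa using ne_of_gt hspos
  have hL : ((s:ℝ):ℂ) • v + ((s:ℝ):ℂ) • w = ((s:ℝ):ℂ) • (v + w) := (smul_add _ _ _).symm
  have hR : ((s:ℝ):ℂ) • v' + ((s:ℝ):ℂ) • w' = ((s:ℝ):ℂ) • (v' + w') := (smul_add _ _ _).symm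
  rw [hL, hR, map_smul, spanSmul hsC, spanSmul hsC] at hS
  have hmem : m (v + w) ∈ Submodule.span ℂ {v' + w'} := by
    rw [← hS]; exact Submodule.mem_span_singleton_self _
  obtain ⟨lam, hlam⟩ := Submodule.mem_span_singleton.mp hmem
  have hexp : lam • (v' + w') = m ((lam * (↑a)⁻¹) • v + (lam * μ) • w) := by
    rw [hv', hw', map_add, map_smul, map_smul, smul_add, smul_smul, smul_smul]
  rw [hexp] at hlam
  have heq : (lam * (↑a)⁻¹) • v + (lam * μ) • w = v + w := hinj hlam
  have hz : ((lam * (↑a)⁻¹ - 1) • v + (lam * μ - 1) • w : H₁) = 0 := by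
    rw [sub_smul, sub_smul, one_smul, one_smul,
      show (lam * (↑a)⁻¹) • v - v + ((lam * μ) • w - w)
          = ((lam * (↑a)⁻¹) • v + (lam * μ) • w) - (v + w) from by abel,
      heq, sub_self]
  obtain ⟨e1, e2⟩ := hind _ _ hz
  have hc1 : lam * (↑a)⁻¹ = 1 := by linear_combination e1
  have hc2 : lam * μ = 1 := by linear_combination e2
  have hlamval : lam = (a:ℂ) := by
    field_simp at hc1
    exact hc1
  have hμval : μ = ((a:ℂ))⁻¹ := by
    rw [hlamval] at hc2
    field_simp at hc2 ⊢
    linear_combination hc2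
  have habs : ‖μ‖ = ‖((a:ℂ))⁻¹‖ := by rw [hμval]
  rw [hμnorm, norm_inv, Complex.norm_real, Real.norm_eq_abs, abs_of_pos hapos,
    inv_inj] at habs
  exact habs.symm


lemma allEq (m : H₁ →ₗ[ℂ] H₂) (hinj : Function.Injective m)
    (hp : PreservesSuperpositions m) (x y : H₁) (hx : ‖x‖ = 1) (hy : ‖y‖ = 1) :
    ‖m x‖ = ‖m y‖ := by
  have hxne : x ≠ 0 := fun h => by simp [h] at hx
  have hyne : y ≠ 0 := fun h => by simp [h] at hy
  by_cases hdep : ∃ α : ℂ, y = α • x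
  · obtain ⟨α, rfl⟩ := hdep
    have hα : ‖α‖ = 1 := by
      have h := hy; rw [norm_smul, hx, mul_one] at h; exact h
    rw [map_smul, norm_smul, hα, one_mul]
  · have hind : ∀ s t : ℂ, s • x + t • y = 0 → s = 0 ∧ t = 0 := by
      intro s t hst
      by_cases ht : t = 0
      · subst ht
        rw [zero_smul, add_zero, smul_eq_zero] at hst
        exact ⟨hst.resolve_right hxne, rfl⟩
      · exfalso
        apply hdep
        refine ⟨t⁻¹ * (-s), ?_⟩
        have h5 : t • y = -(s • x) := eq_neg_of_add_eq_zero_left (by rw [add_comm]; exact hst)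
        calc y = (t⁻¹ * t) • y := by rw [inv_mul_cancel₀ ht, one_smul]
          _ = t⁻¹ • (t • y) := mul_smul _ _ _
          _ = t⁻¹ • (-(s • x)) := by rw [h5]
          _ = (t⁻¹ * (-s)) • x := by rw [smul_neg, ← mul_smul, mul_neg, neg_smul]
    by_cases ht0 : ⟪x, y⟫ = 0
    · -- go through the midpoint
      set cc : ℂ := (((Real.sqrt 2)⁻¹ : ℝ) : ℂ) with hcc
      have hs2 : (0:ℝ) < Real.sqrt 2 := Real.sqrt_pos.mpr (by norm_num)
      have hccne : cc ≠ 0 := by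
        rw [hcc]
        simpa using ne_of_gt (inv_pos.mpr hs2)
      set u : H₁ := cc • (x + y) with hu
      have hxy : ‖x + y‖ = Real.sqrt 2 := by
        have h2 : ‖x + y‖^2 = 2 := by
          rw [norm_add_sq (𝕜 := ℂ), hx, hy, ht0]
          norm_num
        rw [← Real.sqrt_sq (norm_nonneg (x + y)), h2]
      have hun : ‖u‖ = 1 := by
        rw [hu, norm_smul, hcc, Complex.norm_real, Real.norm_eq_abs,
          abs_of_pos (inv_pos.mpr hs2), hxy, inv_mul_cancel₀ (ne_of_gt hs2)]
      have hxx : ⟪x, x⟫ = 1 := by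
        rw [inner_self_eq_norm_sq_to_K, hx]; norm_num
      have hyy : ⟪y, y⟫ = 1 := by
        rw [inner_self_eq_norm_sq_to_K, hy]; norm_num
      have hyx : ⟪y, x⟫ = 0 := by
        rw [← inner_conj_symm, ht0, map_zero]
      have hxu : ⟪x, u⟫ = cc := by
        rw [hu, inner_smul_right, inner_add_right, hxx, ht0]
        ring
      have huy : ⟪u, y⟫ = cc := by
        rw [hu, inner_smul_left, inner_add_left, ht0, hyy, hcc, Complex.conj_ofReal]
        ring
      have hccim : cc.im = 0 := by rw [hcc, Complex.ofReal_im]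
      have hccre : 0 < cc.re := by
        rw [hcc, Complex.ofReal_re]
        positivity
      have hind1 : ∀ s t : ℂ, s • x + t • u = 0 → s = 0 ∧ t = 0 := by
        intro s t hst
        rw [hu, smul_smul, smul_add, ← add_assoc, ← add_smul] at hst
        obtain ⟨e1, e2⟩ := hind _ _ hst
        have ht : t = 0 := by
          rcases mul_eq_zero.mp e2 with h | h
          · exact h
          · exact absurd h hccne
        refine ⟨?_, ht⟩
        rw [ht, zero_mul] at e1
        simpa using e1
      have hind2 : ∀ s t : ℂ, s • u + t • y = 0 → s = 0 ∧ t = 0 := by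
        intro s t hst
        rw [hu, smul_smul, smul_add, add_assoc, ← add_smul] at hst
        obtain ⟨e1, e2⟩ := hind _ _ hst
        have hs : s = 0 := by
          rcases mul_eq_zero.mp e1 with h | h
          · exact h
          · exact absurd h hccne
        refine ⟨hs, ?_⟩
        rw [hs, zero_mul, zero_add] at e2
        exact e2
      have k1 := keyLemma m hinj hp x u hx hun hind1 (by rw [hxu]; exact hccim)
        (by rw [hxu]; exact hccre)
      have k2 := keyLemma m hinj hp u y hun hy hind2 (by rw [huy]; exact hccim)
        (by rw [huy]; exact hccre)
      rw [k1, k2]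
    · -- adjust the phase of y
      set t0 : ℂ := ⟪x, y⟫ with ht0s
      have htpos : (0:ℝ) < ‖t0‖ := norm_pos_iff.mpr ht0
      set μ : ℂ := (starRingEnd ℂ) t0 / ((‖t0‖ : ℝ) : ℂ) with hμ
      have hμnorm : ‖μ‖ = 1 := by
        rw [hμ, norm_div, RCLike.norm_conj, Complex.norm_real, Real.norm_eq_abs,
          abs_of_pos htpos, div_self (ne_of_gt htpos)]
      have hμne : μ ≠ 0 := fun h => by rw [h] at hμnorm; simp at hμnorm
      set y₂ : H₁ := μ • y with hy₂
      have hy₂n : ‖y₂‖ = 1 := by rw [hy₂, norm_smul, hμnorm, hy, mul_one]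
      have hxy₂ : ⟪x, y₂⟫ = ((‖t0‖ : ℝ) : ℂ) := by
        rw [hy₂, inner_smul_right, ← ht0s, hμ, div_mul_eq_mul_div,
          mul_comm ((starRingEnd ℂ) t0) t0, Complex.mul_conj']
        have habsne : ((‖t0‖ : ℝ) : ℂ) ≠ 0 := by
          simpa using ne_of_gt htpos
        rw [sq, mul_div_assoc, div_self habsne, mul_one]
      have hind3 : ∀ s t : ℂ, s • x + t • y₂ = 0 → s = 0 ∧ t = 0 := by
        intro s t hst
        rw [hy₂, smul_smul] at hst
        obtain ⟨e1, e2⟩ := hind _ _ hst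
        refine ⟨e1, ?_⟩
        rcases mul_eq_zero.mp e2 with h | h
        · exact h
        · exact absurd h hμne
      have k := keyLemma m hinj hp x y₂ hx hy₂n hind3
        (by rw [hxy₂, Complex.ofReal_im]) (by rw [hxy₂, Complex.ofReal_re]; exact htpos)
      rw [k, hy₂, map_smul, norm_smul, hμnorm, one_mul]

end Aux

theorem preservesSuperpositions_iff_isometry_up_to_scalar
    {H₁ H₂ : Type*}
    [NormedAddCommGroup H₁] [InnerProductSpace ℂ H₁]
    [NormedAddCommGroup H₂] [InnerProductSpace ℂ H₂]
    (m : H₁ →ₗ[ℂ] H₂) (hinj : Function.Injective m) :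
    PreservesSuperpositions m ↔ ∃ c : ℝ, 0 < c ∧ ∀ u : H₁, ‖m u‖ = c * ‖u‖ := by
  constructor
  · intro hp
    by_cases hH : ∀ u : H₁, u = 0
    · exact ⟨1, one_pos, fun u => by rw [hH u]; simp⟩
    · push_neg at hH
      obtain ⟨u₀, hu₀⟩ := hH
      have hu₀n : (0:ℝ) < ‖u₀‖ := norm_pos_iff.mpr hu₀
      set v₀ : H₁ := ((‖u₀‖⁻¹ : ℝ) : ℂ) • u₀ with hv₀def
      have hv₀n : ‖v₀‖ = 1 := by
        rw [hv₀def, norm_smul, Complex.norm_real, Real.norm_eq_abs,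
          abs_of_pos (inv_pos.mpr hu₀n), inv_mul_cancel₀ (ne_of_gt hu₀n)]
      have hv₀ne : v₀ ≠ 0 := fun h => by simp [h] at hv₀n
      have hmv₀ne : m v₀ ≠ 0 := fun h => hv₀ne (hinj (by simp [h]))
      refine ⟨‖m v₀‖, norm_pos_iff.mpr hmv₀ne, fun u => ?_⟩
      rcases eq_or_ne u 0 with rfl | hune
      · simp
      · have hun : (0:ℝ) < ‖u‖ := norm_pos_iff.mpr hune
        have h := allEq m hinj hp (((‖u‖⁻¹ : ℝ) : ℂ) • u) v₀
          (by rw [norm_smul, Complex.norm_real, Real.norm_eq_abs,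
            abs_of_pos (inv_pos.mpr hun), inv_mul_cancel₀ (ne_of_gt hun)]) hv₀n
        rw [map_smul, norm_smul, Complex.norm_real, Real.norm_eq_abs,
          abs_of_pos (inv_pos.mpr hun)] at h
        field_simp at h
        rw [h, mul_comm]
  · rintro ⟨c, hc, hn⟩
    have hip := innerScaled m hn
    have hcC : ((c:ℝ):ℂ) ≠ 0 := by simpa using ne_of_gt hc
    have hc2 : ((c:ℝ):ℂ)^2 ≠ 0 := pow_ne_zero _ hcC
    intro v w hv hw him hre r hr0 hr1
    have hvne : v ≠ 0 := fun h => by simp [h] at hv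
    have hwne : w ≠ 0 := fun h => by simp [h] at hw
    have hmvne : m v ≠ 0 := fun h => hvne (hinj (by simp [h]))
    have hmwne : m w ≠ 0 := fun h => hwne (hinj (by simp [h]))
    constructor
    · intro hall
      have h0 := hall (m v) (Submodule.mem_span_singleton_self _)
        (m w) (Submodule.mem_span_singleton_self _)
      rw [hip] at h0
      have : ⟪v, w⟫ = 0 := (mul_eq_zero.mp h0).resolve_left hc2
      rw [this] at hre
      simp at hre
    · intro v' w' hv' hw' hs1 hs2 him' hre'
      have hmv : m v ∈ Submodule.span ℂ {v'} := by
        rw [hs1]; exact Submodule.mem_span_singleton_self _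
      have hmw : m w ∈ Submodule.span ℂ {w'} := by
        rw [hs2]; exact Submodule.mem_span_singleton_self _
      obtain ⟨α, hα⟩ := Submodule.mem_span_singleton.mp hmv
      obtain ⟨β, hβ⟩ := Submodule.mem_span_singleton.mp hmw
      have hαne : α ≠ 0 := by
        rintro rfl; rw [zero_smul] at hα; exact hmvne hα.symm
      have hβne : β ≠ 0 := by
        rintro rfl; rw [zero_smul] at hβ; exact hmwne hβ.symm
      have hαnorm : ‖α‖ = c := by
        have := congrArg norm hα
        rw [norm_smul, hv', mul_one, hn, hv, mul_one] at this
        exact this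
      have hβnorm : ‖β‖ = c := by
        have := congrArg norm hβ
        rw [norm_smul, hw', mul_one, hn, hw, mul_one] at this
        exact this
      have hv'eq : v' = α⁻¹ • m v := by
        rw [← hα, smul_smul, inv_mul_cancel₀ hαne, one_smul]
      have hw'eq : w' = β⁻¹ • m w := by
        rw [← hβ, smul_smul, inv_mul_cancel₀ hβne, one_smul]
      have hinner' : ⟪v', w'⟫ = ((starRingEnd ℂ) α * β)⁻¹ * (((c:ℝ):ℂ)^2 * ⟪v, w⟫) := by
        rw [hv'eq, hw'eq, inner_smul_left, inner_smul_right, hip, map_inv₀, mul_inv]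
        ring
      -- both inner products are real
      have hvwr : ⟪v, w⟫ = (((⟪v, w⟫).re : ℝ) : ℂ) := by
        apply Complex.ext
        · rw [Complex.ofReal_re]
        · rw [Complex.ofReal_im, him]
      have hvwr' : ⟪v', w'⟫ = (((⟪v', w'⟫).re : ℝ) : ℂ) := by
        apply Complex.ext
        · rw [Complex.ofReal_re]
        · rw [Complex.ofReal_im, him']
      set p : ℝ := (⟪v, w⟫).re with hp
      set p' : ℝ := (⟪v', w'⟫).re with hp'
      set q : ℂ := (starRingEnd ℂ) α * β with hq
      have hqne : q ≠ 0 := mul_ne_zero (by simpa using hαne) hβne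
      have hqval : q = ((c^2 * p / p' : ℝ) : ℂ) := by
        have h1 : (p' : ℂ) = q⁻¹ * (((c:ℝ):ℂ)^2 * (p:ℂ)) := by
          rw [← hvwr, ← hvwr']; exact hinner'
        have hp'ne : ((p':ℝ):ℂ) ≠ 0 := by
          simpa using ne_of_gt hre'
        field_simp at h1 ⊢
        push_cast
        field_simp
        linear_combination h1
      have hqnorm : ‖q‖ = c^2 := by
        rw [hq, norm_mul, RCLike.norm_conj, hαnorm, hβnorm, sq]
      have hpratio : c^2 * p / p' = c^2 := by
        have := hqnorm
        rw [hqval, Complex.norm_real, Real.norm_eq_abs] at this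
        rw [abs_of_pos (by positivity : (0:ℝ) < c^2 * p / p')] at this
        exact this
      have hqc : q = ((c:ℝ):ℂ)^2 := by
        rw [hqval, hpratio]; push_cast; ring
      have hβα : β = α := by
        have hαα : (starRingEnd ℂ) α * α = ((c:ℝ):ℂ)^2 := by
          rw [mul_comm, Complex.mul_conj', hαnorm]
        apply mul_left_cancel₀ (show (starRingEnd ℂ) α ≠ 0 by simpa using hαne)
        rw [← hq, hqc, ← hαα]
      have hfinal : (Real.sqrt r : ℂ) • v' + (Real.sqrt (1-r) : ℂ) • w'
          = α⁻¹ • m ((Real.sqrt r : ℂ) • v + (Real.sqrt (1-r) : ℂ) • w) := by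
        rw [map_add, map_smul, map_smul, hv'eq, hw'eq, hβα, smul_add,
          smul_comm ((Real.sqrt r : ℂ)) α⁻¹, smul_comm ((Real.sqrt (1-r) : ℂ)) α⁻¹]
      rw [hfinal, spanSmul (inv_ne_zero hαne)]
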